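/- Let P ∈ Δ_E, let α ≤ 1/(2m), let R be P with each entry rounded down to the nearest integer multiple of α, and let P̃ = R/∑_{ij}R_{ij}. Then (i) ‖P̃ - P‖₁ ≤ 2αm, and (ii) ‖P̃𝟏 - P̃ᵀ𝟏‖₁ ≤ 2‖P𝟏 - Pᵀ𝟏‖₁ + 4αm. -/

import Mathlib

open Finset

/-- A directed cycle: a nonempty list of distinct vertices whose consecutive
pairs (cyclically) are edges of `E`. -/
def IsCycle {n : ℕ} (E : Finset (Fin n × Fin n)) (c : List (Fin n)) : Prop :=
  c ≠ [] ∧ c.Nodup ∧ ∀ p ∈ c.zip (c.rotate 1), p ∈ E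

/-- Mean weight of a cycle. -/
noncomputable def meanWeight {n : ℕ} (w : Fin n × Fin n → ℝ) (c : List (Fin n)) : ℝ :=
  ((c.zip (c.rotate 1)).map w).sum / c.length

/-- Min-mean-cycle value of the digraph `(V, E, w)`. -/
noncomputable def mmc {n : ℕ} (E : Finset (Fin n × Fin n)) (w : Fin n × Fin n → ℝ) : ℝ :=
  sInf {x : ℝ | ∃ c, IsCycle E c ∧ meanWeight w c = x}

/-- Membership in `Δ_E`: a nonnegative matrix supported on `E` with total sum 1. -/
def InDeltaE {n : ℕ} (E : Finset (Fin n × Fin n)) (P : Matrix (Fin n) (Fin n) ℝ) : Prop :=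
  (∀ i j, 0 ≤ P i j) ∧ (∀ i j, (i, j) ∉ E → P i j = 0) ∧ (∑ i, ∑ j, P i j) = 1

/-- A circulation: netflow is balanced at every vertex. -/
def IsBalanced {n : ℕ} (P : Matrix (Fin n) (Fin n) ℝ) : Prop :=
  ∀ i, (∑ j, P i j) = ∑ j, P j i

/-- Total netflow imbalance `‖P𝟏 - Pᵀ𝟏‖₁`. -/
noncomputable def imb {n : ℕ} (P : Matrix (Fin n) (Fin n) ℝ) : ℝ :=
  ∑ i, |(∑ j, P i j) - ∑ j, P j i|

/-- Entrywise ℓ₁ norm of a matrix. -/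
noncomputable def l1 {n : ℕ} (P : Matrix (Fin n) (Fin n) ℝ) : ℝ :=
  ∑ i, ∑ j, |P i j|

/-- There is a directed path from `i` to `j` of length at most `d`. -/
def ConnectsWithin {n : ℕ} (E : Finset (Fin n × Fin n)) (d : ℕ) (i j : Fin n) : Prop :=
  ∃ l : List (Fin n), l.length ≤ d ∧ List.Chain (fun a b => (a, b) ∈ E) i l ∧
    (i :: l).getLast (List.cons_ne_nil _ _) = j

/-- A directed walk from `s` to `v` along edges of `E`, recorded by its
list of vertices after `s`. -/
def IsWalkFrom {n : ℕ} (E : Finset (Fin n × Fin n)) (s v : Fin n) (l : List (Fin n)) : Prop :=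
  List.Chain (fun a b => (a, b) ∈ E) s l ∧ (s :: l).getLast (List.cons_ne_nil _ _) = v

/-- Weight of a walk. -/
noncomputable def walkWeight {n : ℕ} (w : Fin n × Fin n → ℝ) (s : Fin n) (l : List (Fin n)) : ℝ :=
  (((s :: l).zip l).map w).sum

/-- **Quantization helper lemma.** Let `P ∈ Δ_E`, `α ≤ 1/(2m)` (with `m = |E|`), let
`R` round each entry of `P` down to the nearest integer multiple of `α`, and let
`P̃ = R/∑_{ij} R_{ij}`. Then (i) `‖P̃ - P‖₁ ≤ 2αm` and
(ii) `imb(P̃) ≤ 2 imb(P) + 4αm`. -/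
theorem quantization_helper {n : ℕ} (E : Finset (Fin n × Fin n)) (m : ℕ)
    (hm : m = E.card)
    (P R Pt : Matrix (Fin n) (Fin n) ℝ) (α : ℝ) (hα : 0 < α)
    (hαm : α ≤ 1 / (2 * m))
    (hP : InDeltaE E P)
    (hR : ∀ i j, R i j = α * ⌊P i j / α⌋)
    (hPt : ∀ i j, Pt i j = R i j / ∑ i', ∑ j', R i' j') :
    l1 (Pt - P) ≤ 2 * α * m ∧ imb Pt ≤ 2 * imb P + 4 * α * m := by
  obtain ⟨hP0, hPE, hPsum⟩ := hP
  have hm1 : 1 ≤ m := by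
    rcases Nat.eq_zero_or_pos m with h | h
    · exfalso; subst h; simp at hαm; linarith
    · exact h
  have hmR : (0:ℝ) < m := by exact_mod_cast hm1
  have hαm2 : α * m ≤ 1/2 := by
    have h2 := mul_le_mul_of_nonneg_right hαm (le_of_lt hmR)
    have h3 : 1/(2*(m:ℝ)) * m = 1/2 := by field_simp
    linarith
  have hR0 : ∀ i j, 0 ≤ R i j := by
    intro i j; rw [hR]
    have h : (0:ℤ) ≤ ⌊P i j / α⌋ := Int.floor_nonneg.mpr (div_nonneg (hP0 i j) hα.le)
    have : (0:ℝ) ≤ (⌊P i j / α⌋ : ℝ) := by exact_mod_cast h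
    exact mul_nonneg hα.le this
  have hRle : ∀ i j, R i j ≤ P i j := by
    intro i j; rw [hR]
    have h := Int.floor_le (P i j / α)
    have h2 : α * (⌊P i j / α⌋ : ℝ) ≤ α * (P i j / α) :=
      mul_le_mul_of_nonneg_left h hα.le
    have h3 : α * (P i j / α) = P i j := by field_simp
    linarith
  have hPRle : ∀ i j, P i j - R i j ≤ α := by
    intro i j; rw [hR]
    have h := Int.sub_one_lt_floor (P i j / α)
    have h2 : α * (P i j / α - 1) ≤ α * (⌊P i j / α⌋ : ℝ) :=
      mul_le_mul_of_nonneg_left h.le hα.le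
    have h3 : α * (P i j / α - 1) = P i j - α := by field_simp
    linarith
  have hRE : ∀ i j, (i, j) ∉ E → R i j = 0 := by
    intro i j h; rw [hR, hPE i j h]; simp
  have key : ∀ (Q : Matrix (Fin n) (Fin n) ℝ), (∀ i j, (i, j) ∉ E → Q i j = 0) →
      ∑ i, ∑ j, Q i j = ∑ p ∈ E, Q p.1 p.2 := by
    intro Q hQ
    rw [← Finset.sum_product' (f := fun i j => Q i j)]
    refine (Finset.sum_subset (fun p _ => Finset.mem_product.mpr ⟨mem_univ _, mem_univ _⟩)
      (fun p _ hp => hQ p.1 p.2 (by simpa using hp))).symm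
  set S := ∑ i', ∑ j', R i' j' with hSdef
  have hSsum : S = ∑ p ∈ E, R p.1 p.2 := key R hRE
  have hPsum' : ∑ p ∈ E, P p.1 p.2 = 1 := by rw [← key P hPE]; exact hPsum
  have hdiff : ∑ p ∈ E, (P p.1 p.2 - R p.1 p.2) ≤ α * m := by
    calc ∑ p ∈ E, (P p.1 p.2 - R p.1 p.2) ≤ ∑ _p ∈ E, α :=
          Finset.sum_le_sum (fun p _ => hPRle p.1 p.2)
      _ = E.card * α := by rw [Finset.sum_const, nsmul_eq_mul]
      _ = α * m := by rw [hm]; ring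
  have h1S : 1 - S ≤ α * m := by
    have : ∑ p ∈ E, (P p.1 p.2 - R p.1 p.2) = 1 - S := by
      rw [Finset.sum_sub_distrib, hPsum', hSsum]
    linarith
  have hS1 : S ≤ 1 := by
    have : S ≤ ∑ i, ∑ j, P i j :=
      Finset.sum_le_sum (fun i _ => Finset.sum_le_sum (fun j _ => hRle i j))
    linarith
  have hSpos : 0 < S := by linarith
  -- l1 computations
  have e1 : ∀ i j, |Pt i j - R i j| = R i j * ((1 - S)/S) := by
    intro i j
    have h : Pt i j - R i j = R i j * ((1 - S)/S) := by
      rw [hPt i j]; field_simp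
    rw [h, abs_of_nonneg (mul_nonneg (hR0 i j) (div_nonneg (by linarith) hSpos.le))]
  have e2 : ∀ i j, |R i j - P i j| = P i j - R i j := by
    intro i j
    rw [abs_sub_comm, abs_of_nonneg (by linarith [hRle i j])]
  have sum1 : ∑ i, ∑ j, |Pt i j - R i j| = 1 - S := by
    simp_rw [e1, ← Finset.sum_mul]
    rw [← hSdef]; field_simp
  have sum2 : ∑ i, ∑ j, |R i j - P i j| = 1 - S := by
    simp_rw [e2, Finset.sum_sub_distrib]
    rw [hPsum, ← hSdef]
  have hl1 : l1 (Pt - P) ≤ 2 * α * m := by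
    have htri : l1 (Pt - P) ≤ (∑ i, ∑ j, |Pt i j - R i j|) + ∑ i, ∑ j, |R i j - P i j| := by
      unfold l1
      rw [← Finset.sum_add_distrib]
      refine Finset.sum_le_sum (fun i _ => ?_)
      rw [← Finset.sum_add_distrib]
      refine Finset.sum_le_sum (fun j _ => ?_)
      simp only [Matrix.sub_apply]
      calc |Pt i j - P i j| = |(Pt i j - R i j) + (R i j - P i j)| := by ring_nf
        _ ≤ |Pt i j - R i j| + |R i j - P i j| := abs_add_le _ _
    rw [sum1, sum2] at htri
    linarith
  refine ⟨hl1, ?_⟩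
  -- imbalance
  have himbP : 0 ≤ imb P := Finset.sum_nonneg (fun i _ => abs_nonneg _)
  have hrow : ∑ i, ∑ j, |(Pt - P) i j| = l1 (Pt - P) := rfl
  have hcol : ∑ i, ∑ j, |(Pt - P) j i| = l1 (Pt - P) := by
    rw [Finset.sum_comm]; rfl
  have himb : imb Pt ≤ imb P + 2 * l1 (Pt - P) := by
    unfold imb
    have step : ∀ i, |(∑ j, Pt i j) - ∑ j, Pt j i| ≤
        |(∑ j, P i j) - ∑ j, P j i| + ((∑ j, |(Pt - P) i j|) + ∑ j, |(Pt - P) j i|) := by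
      intro i
      have h1 : |∑ j, (Pt - P) i j| ≤ ∑ j, |(Pt - P) i j| := Finset.abs_sum_le_sum_abs _ _
      have h2 : |∑ j, (Pt - P) j i| ≤ ∑ j, |(Pt - P) j i| := Finset.abs_sum_le_sum_abs _ _
      have hd : (∑ j, Pt i j) - ∑ j, Pt j i =
          ((∑ j, P i j) - ∑ j, P j i) + ((∑ j, (Pt - P) i j) - ∑ j, (Pt - P) j i) := by
        simp only [Matrix.sub_apply, Finset.sum_sub_distrib]; ring
      calc |(∑ j, Pt i j) - ∑ j, Pt j i|
          = |((∑ j, P i j) - ∑ j, P j i) + ((∑ j, (Pt - P) i j) - ∑ j, (Pt - P) j i)| := by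
            rw [hd]
        _ ≤ |(∑ j, P i j) - ∑ j, P j i| + |(∑ j, (Pt - P) i j) - ∑ j, (Pt - P) j i| :=
            abs_add_le _ _
        _ ≤ |(∑ j, P i j) - ∑ j, P j i| + (|∑ j, (Pt - P) i j| + |∑ j, (Pt - P) j i|) := by
            have := abs_sub (∑ j, (Pt - P) i j) (∑ j, (Pt - P) j i)
            linarith
        _ ≤ _ := by linarith
    calc ∑ i, |(∑ j, Pt i j) - ∑ j, Pt j i|
        ≤ ∑ i, (|(∑ j, P i j) - ∑ j, P j i| + ((∑ j, |(Pt - P) i j|) + ∑ j, |(Pt - P) j i|)) :=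
          Finset.sum_le_sum (fun i _ => step i)
      _ = imb P + (l1 (Pt - P) + l1 (Pt - P)) := by
          rw [Finset.sum_add_distrib, Finset.sum_add_distrib, hrow, hcol]; rfl
      _ = imb P + 2 * l1 (Pt - P) := by ring
  linarith
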